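/- Let L be a first-order language with no relation symbols and no 0-ary function symbols, and M a naturally preordered idempotent L-structure with algebraic predecessor preorder ≤_M. Then for every i ∈ M, the set {j ∈ M | j ≤_M i and i ≤_M j} (the ≡_M-equivalence class of i) is a closed subset of M; in particular, M is a union of closed subsets. -/
import Mathlib


open FirstOrder

/-- `b` is an algebraic predecessor of `a` in one step: `a` is the value of some
`n`-ary operation (`n ≥ 1`) at a tuple having `b` among its components. -/
def AlgPred {L : FirstOrder.Language} {M : Type*} (S : L.Structure M) (b a : M) : Prop :=
  ∃ n : ℕ, 0 < n ∧ ∃ (σ : L.Functions n) (t : Fin n → M) (k : Fin n),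
    S.funMap σ t = a ∧ t k = b

/-- The algebraic predecessor preorder: the reflexive–transitive closure of `AlgPred`. -/
def AlgPredLE {L : FirstOrder.Language} {M : Type*} (S : L.Structure M) : M → M → Prop :=
  Relation.ReflTransGen (AlgPred S)

/-- A map is an `L`-homomorphism if it preserves every operation. -/
def IsAlgHom {L : FirstOrder.Language} {M N : Type*} (S : L.Structure M) (T : L.Structure N)
    (f : M → N) : Prop :=
  ∀ (n : ℕ) (σ : L.Functions n) (t : Fin n → M), f (S.funMap σ t) = T.funMap σ (fun k => f (t k))

/-- An L-structure is idempotent if every operation of arity `n ≥ 1` applied to a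
constant tuple returns its value. -/
def IsIdemStruct {L : FirstOrder.Language} {M : Type*} (S : L.Structure M) : Prop :=
  ∀ (n : ℕ), 0 < n → ∀ (σ : L.Functions n) (a : M), S.funMap σ (fun _ => a) = a

/-- An L-structure is naturally preordered if every operation of arity `n ≥ 1` is
isotone with respect to the algebraic predecessor preorder. -/
def IsNatPreordered {L : FirstOrder.Language} {M : Type*} (S : L.Structure M) : Prop :=
  ∀ (n : ℕ), 0 < n → ∀ (σ : L.Functions n) (j i : Fin n → M),
    (∀ k, AlgPredLE S (j k) (i k)) → AlgPredLE S (S.funMap σ j) (S.funMap σ i)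

/-- A subset is closed if it is closed under every operation of arity `n ≥ 1`. -/
def IsClosedSubset {L : FirstOrder.Language} {M : Type*} (S : L.Structure M) (X : Set M) : Prop :=
  ∀ (n : ℕ), 0 < n → ∀ (σ : L.Functions n) (t : Fin n → M), (∀ k, t k ∈ X) → S.funMap σ t ∈ X

/-- A congruence on an L-structure: an equivalence relation compatible with every
operation of arity `n ≥ 1`. -/
def IsCongruence {L : FirstOrder.Language} {M : Type*} (S : L.Structure M)
    (Φ : M → M → Prop) : Prop :=
  Equivalence Φ ∧ ∀ (n : ℕ), 0 < n → ∀ (σ : L.Functions n) (x y : Fin n → M),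
    (∀ k, Φ (x k) (y k)) → Φ (S.funMap σ x) (S.funMap σ y)

theorem stmt8 (L : FirstOrder.Language) (hrel : ∀ n, IsEmpty (L.Relations n))
    (h0 : IsEmpty (L.Functions 0)) {M : Type*} (S : L.Structure M)
    (hidem : IsIdemStruct S) (hnat : IsNatPreordered S) :
    (∀ i : M, IsClosedSubset S {j | AlgPredLE S j i ∧ AlgPredLE S i j}) ∧
      (⋃ i : M, {j | AlgPredLE S j i ∧ AlgPredLE S i j}) = Set.univ := by
  constructor
  · intro i n hn σ t ht
    constructor
    · have h1 : AlgPredLE S (S.funMap σ t) (S.funMap σ (fun _ => i)) :=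
        hnat n hn σ t (fun _ => i) (fun k => (ht k).1)
      rwa [hidem n hn σ i] at h1
    · have h2 : AlgPredLE S (S.funMap σ (fun _ => i)) (S.funMap σ t) :=
        hnat n hn σ (fun _ => i) t (fun k => (ht k).2)
      rwa [hidem n hn σ i] at h2
  · ext j
    simp only [Set.mem_iUnion, Set.mem_setOf_eq, Set.mem_univ, iff_true]
    exact ⟨j, Relation.ReflTransGen.refl, Relation.ReflTransGen.refl⟩
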